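/- For all integers n ≥ 0 and k ≥ 1, the cardinality of R̄D_{n+2,k} equals the cardinality of RHD_{n+1,k−1}. -/

import Mathlib

open Finset

/-- The number of descents of a permutation of `{1, …, m+1}`. -/
def des {m : ℕ} (π : Equiv.Perm (Fin (m + 1))) : ℕ :=
  (Finset.univ.filter fun i : Fin m => π i.succ < π i.castSucc).card

/-- The set `𝒬_{m+1}` of permutations of `{1, …, m+1}` whose largest entry appears
as the first descent (the identity permutation is included). -/
def Qset (m : ℕ) : Finset (Equiv.Perm (Fin (m + 1))) :=
  Finset.univ.filter fun π =>
    ∀ i : Fin m, i.succ ≤ π⁻¹ (Fin.last m) → π i.castSucc < π i.succ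

/-- Condition (3) in the definition of `R̄D`: with `a = π⁻¹(1)` (smallest entry is
`0 : Fin (m+1)`, positions `0`-indexed), either `a` is the last position, or `a` is
an interior position and `π(a-1) < π(a+1)`. -/
def rdbarCond {m : ℕ} (π : Equiv.Perm (Fin (m + 1))) : Prop :=
  π⁻¹ 0 = Fin.last m ∨ ∃ j : ℕ, ∃ h : j + 2 ≤ m,
    (π⁻¹ 0 : ℕ) = j + 1 ∧ π ⟨j, by omega⟩ < π ⟨j + 2, by omega⟩

open scoped Classical in
/-- `R̄D_{m+1,k}`: permutations `π` of `{1, …, m+1}` with `π ∈ 𝒬_{m+1}`, `des π = k`,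
and, with `a = π⁻¹(1)`, either `a = m+1` or `π(a-1) < π(a+1)`. -/
noncomputable def RDbar (m k : ℕ) : Finset (Equiv.Perm (Fin (m + 1))) :=
  (Qset m).filter fun π => des π = k ∧ rdbarCond π

/-- `RHD_{n+1,k-1}` (for `k ≥ 1`, here as `RHD n k`): pairs `(π, i)` with
`π ∈ 𝒬_{n+1}`, `des π = k - 1`, `i ∈ {1, …, n - k + 2}`, and `i > π⁻¹(n+1) - 1`,
where `π⁻¹(n+1)` is the (`1`-indexed) position of the largest entry. -/
def RHD (n k : ℕ) : Finset (Equiv.Perm (Fin (n + 1)) × ℕ) :=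
  (Qset n ×ˢ Finset.Icc 1 (n + 2 - k)).filter fun p =>
    des p.1 = k - 1 ∧ (p.1⁻¹ (Fin.last n) : ℕ) < p.2


section Aux
open Equiv
variable {n : ℕ}

def ins (π : Equiv.Perm (Fin (n+1))) (p : Fin (n+2)) : Equiv.Perm (Fin (n+2)) :=
  (finSuccEquiv' p).trans ((Equiv.optionCongr π).trans (finSuccEquiv' 0).symm)

def delE (σ : Equiv.Perm (Fin (n+2))) (p : Fin (n+2)) :
    Option (Fin (n+1)) ≃ Option (Fin (n+1)) :=
  (finSuccEquiv' p).symm.trans (σ.trans (finSuccEquiv' 0))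

def del (σ : Equiv.Perm (Fin (n+2))) (p : Fin (n+2)) : Equiv.Perm (Fin (n+1)) :=
  Equiv.removeNone (delE σ p)

theorem optionCongr_removeNone {α β : Type*} (e : Option α ≃ Option β) (h : e none = none) :
    Equiv.optionCongr (Equiv.removeNone e) = e := by
  apply Equiv.ext; intro x
  cases x with
  | none => simp [h]
  | some x =>
    obtain ⟨b, hb⟩ : ∃ b, e (some x) = some b := by
      rcases h' : e (some x) with _ | b
      · exact absurd (e.injective (h'.trans h.symm)) (by simp)
      · exact ⟨b, rfl⟩
    have h2 : (Equiv.removeNone e) x = b :=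
      Option.some_injective _ ((Equiv.removeNone_some e ⟨b, hb⟩).trans hb)
    simp [h2, hb]

theorem ins_del (σ : Equiv.Perm (Fin (n+2))) (p : Fin (n+2)) (h : σ p = 0) :
    ins (del σ p) p = σ := by
  unfold ins del
  rw [optionCongr_removeNone _ (by simp [delE, h, finSuccEquiv'_at])]
  ext x
  simp [delE]

theorem del_ins (π : Equiv.Perm (Fin (n+1))) (p : Fin (n+2)) : del (ins π p) p = π := by
  have : delE (ins π p) p = Equiv.optionCongr π := by
    ext x; simp [delE, ins]
  rw [del, this, Equiv.removeNone_optionCongr]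

/-- value of a permutation at a natural index, 0 out of range -/
def vl {m : ℕ} (π : Equiv.Perm (Fin m)) (i : ℕ) : ℕ :=
  if h : i < m then (π ⟨i, h⟩ : ℕ) else 0

theorem ins_apply_self (π : Equiv.Perm (Fin (n+1))) (p : Fin (n+2)) : ins π p p = 0 := by
  rw [ins]
  simp [finSuccEquiv'_at]

theorem ins_inv_zero (π : Equiv.Perm (Fin (n+1))) (p : Fin (n+2)) : (ins π p)⁻¹ 0 = p := by
  rw [← ins_apply_self π p]; simp

theorem vl_ins_lt (π : Equiv.Perm (Fin (n+1))) (p : Fin (n+2)) (x : ℕ) (hx : x < (p:ℕ)) :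
    vl (ins π p) x = vl π x + 1 := by
  have hx2 : x < n+2 := lt_trans hx p.isLt
  have hx1 : x < n+1 := by have := p.isLt; omega
  rw [vl, dif_pos hx2, vl, dif_pos hx1]
  have h1 : (⟨x, hx2⟩ : Fin (n+2)) = Fin.castSucc ⟨x, hx1⟩ := rfl
  rw [h1, ins]
  simp only [Equiv.trans_apply]
  rw [finSuccEquiv'_below (show Fin.castSucc ⟨x,hx1⟩ < p from by
    simp [Fin.lt_def]; omega)]
  simp only [Equiv.optionCongr_apply, Option.map_coe]
  rw [Option.map_some, finSuccEquiv'_symm_some_above (Fin.zero_le _)]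
  simp

theorem vl_ins_self (π : Equiv.Perm (Fin (n+1))) (p : Fin (n+2)) : vl (ins π p) p = 0 := by
  rw [vl, dif_pos p.isLt]
  have : (⟨(p:ℕ), p.isLt⟩ : Fin (n+2)) = p := rfl
  rw [this, ins_apply_self]
  rfl

theorem vl_ins_gt (π : Equiv.Perm (Fin (n+1))) (p : Fin (n+2)) (x : ℕ) (hx : (p:ℕ) < x)
    (hx2 : x < n+2) : vl (ins π p) x = vl π (x-1) + 1 := by
  have hx1 : x - 1 < n+1 := by omega
  rw [vl, dif_pos hx2, vl, dif_pos hx1]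
  have h1 : (⟨x, hx2⟩ : Fin (n+2)) = Fin.succ ⟨x-1, hx1⟩ := by
    apply Fin.ext; simp; omega
  rw [h1, ins]
  simp only [Equiv.trans_apply]
  rw [finSuccEquiv'_above (show p ≤ Fin.castSucc ⟨x-1,hx1⟩ from by
    simp [Fin.le_def]; omega)]
  simp only [Equiv.optionCongr_apply, Option.map_some]
  rw [finSuccEquiv'_symm_some_above (Fin.zero_le _)]
  simp

theorem vl_pos {m : ℕ} (π : Equiv.Perm (Fin m)) {i : ℕ} (h : i < m) :
    vl π i = π ⟨i, h⟩ := dif_pos h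

theorem vl_coe {m : ℕ} (π : Equiv.Perm (Fin m)) (i : Fin m) : vl π (i : ℕ) = π i := by
  rw [vl_pos π i.isLt, Fin.eta]

theorem des_eq {m : ℕ} (π : Equiv.Perm (Fin (m+1))) :
    des π = ((Finset.range m).filter fun i => vl π (i+1) < vl π i).card := by
  apply Finset.card_bij (fun (i : Fin m) _ => (i : ℕ))
  · intro i hi
    simp only [des, Finset.mem_filter, Finset.mem_univ, true_and] at hi
    simp only [Finset.mem_filter, Finset.mem_range]
    refine ⟨i.isLt, ?_⟩
    have h1 : vl π ((i:ℕ)+1) = π i.succ := by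
      rw [vl, dif_pos (by omega : (i:ℕ)+1 < m+1)]; rfl
    have h2 : vl π (i:ℕ) = π i.castSucc := by
      rw [vl, dif_pos (by omega : (i:ℕ) < m+1)]; rfl
    rw [h1, h2]; exact hi
  · intro a _ b _ h; exact Fin.val_injective h
  · intro j hj
    simp only [Finset.mem_filter, Finset.mem_range] at hj
    obtain ⟨hj1, hj2⟩ := hj
    refine ⟨⟨j, hj1⟩, ?_, rfl⟩
    simp only [Finset.mem_filter, Finset.mem_univ, true_and]
    have h1 : vl π (j+1) = π (⟨j, hj1⟩ : Fin m).succ := by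
      rw [vl_pos π (by omega : j+1 < m+1)]; rfl
    have h2 : vl π j = π (⟨j, hj1⟩ : Fin m).castSucc := by
      rw [vl_pos π (by omega : j < m+1)]; rfl
    rw [h1, h2] at hj2; exact hj2

theorem mem_Qset_iff {m : ℕ} (π : Equiv.Perm (Fin (m+1))) :
    π ∈ Qset m ↔ ∀ i : ℕ, i + 1 ≤ (π⁻¹ (Fin.last m) : ℕ) → vl π i < vl π (i+1) := by
  rw [Qset, Finset.mem_filter]
  simp only [Finset.mem_univ, true_and]
  constructor
  · intro h i hi
    have him : i < m := by have := (π⁻¹ (Fin.last m)).isLt; omega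
    have := h ⟨i, him⟩ (by rw [Fin.le_def]; simpa using hi)
    have h1 : vl π i = π (⟨i, him⟩ : Fin m).castSucc := by
      rw [vl_pos π (by omega : i < m+1)]; rfl
    have h2 : vl π (i+1) = π (⟨i, him⟩ : Fin m).succ := by
      rw [vl_pos π (by omega : i+1 < m+1)]; rfl
    rw [h1, h2]; exact this
  · intro h i hi
    have := h (i : ℕ) (by rw [Fin.le_def] at hi; simpa using hi)
    have h1 : vl π (i:ℕ) = π i.castSucc := by
      rw [vl, dif_pos (by omega : (i:ℕ) < m+1)]; rfl
    have h2 : vl π ((i:ℕ)+1) = π i.succ := by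
      rw [vl, dif_pos (by omega : (i:ℕ)+1 < m+1)]; rfl
    rw [h1, h2] at this; exact this

theorem rdbarCond_iff {m : ℕ} (σ : Equiv.Perm (Fin (m+1))) :
    rdbarCond σ ↔ ((σ⁻¹ 0 : ℕ) = m ∨ ∃ j : ℕ, j + 2 ≤ m ∧
      (σ⁻¹ 0 : ℕ) = j + 1 ∧ vl σ j < vl σ (j+2)) := by
  rw [rdbarCond]
  constructor
  · rintro (h | ⟨j, hj, h1, h2⟩)
    · left; rw [h]; simp
    · right
      refine ⟨j, hj, h1, ?_⟩
      have e1 : vl σ j = σ ⟨j, by omega⟩ := by rw [vl_pos σ (by omega : j < m+1)]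
      have e2 : vl σ (j+2) = σ ⟨j+2, by omega⟩ := by rw [vl_pos σ (by omega : j+2 < m+1)]
      rw [e1, e2]; exact h2
  · rintro (h | ⟨j, hj, h1, h2⟩)
    · left; exact Fin.ext (by simpa using h)
    · right
      refine ⟨j, hj, h1, ?_⟩
      have e1 : vl σ j = σ ⟨j, by omega⟩ := by rw [vl_pos σ (by omega : j < m+1)]
      have e2 : vl σ (j+2) = σ ⟨j+2, by omega⟩ := by rw [vl_pos σ (by omega : j+2 < m+1)]
      rw [e1, e2] at h2; exact h2

theorem vl_pi_M (π : Equiv.Perm (Fin (n+1))) :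
    vl π (π⁻¹ (Fin.last n) : ℕ) = n := by
  rw [vl_coe]; simp

theorem ins_inv_last (π : Equiv.Perm (Fin (n+1))) (p : Fin (n+2))
    (hMP : (π⁻¹ (Fin.last n) : ℕ) < (p:ℕ)) :
    ((ins π p)⁻¹ (Fin.last (n+1)) : ℕ) = (π⁻¹ (Fin.last n) : ℕ) := by
  have hM : (π⁻¹ (Fin.last n) : ℕ) < n+1 := (π⁻¹ (Fin.last n)).isLt
  have hv : vl (ins π p) (π⁻¹ (Fin.last n) : ℕ) = n+1 := by
    rw [vl_ins_lt π p _ hMP, vl_pi_M]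
  rw [vl_pos (ins π p) (show ((π⁻¹ (Fin.last n)) : ℕ) < n+2 by omega)] at hv
  have h2 : ins π p ⟨(π⁻¹ (Fin.last n) : ℕ), by omega⟩ = Fin.last (n+1) :=
    Fin.ext (by simpa using hv)
  rw [← h2, Equiv.Perm.coe_inv, Equiv.symm_apply_apply]

theorem ins_inv_last_of_le (π : Equiv.Perm (Fin (n+1))) (p : Fin (n+2))
    (hPM : (p:ℕ) ≤ (π⁻¹ (Fin.last n) : ℕ)) :
    ((ins π p)⁻¹ (Fin.last (n+1)) : ℕ) = (π⁻¹ (Fin.last n) : ℕ) + 1 := by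
  have hM : (π⁻¹ (Fin.last n) : ℕ) < n+1 := (π⁻¹ (Fin.last n)).isLt
  have hv : vl (ins π p) ((π⁻¹ (Fin.last n) : ℕ) + 1) = n+1 := by
    rw [vl_ins_gt π p _ (by omega) (by omega)]
    rw [Nat.add_sub_cancel, vl_pi_M]
  rw [vl_pos (ins π p) (show ((π⁻¹ (Fin.last n)) : ℕ) + 1 < n+2 by omega)] at hv
  have h2 : ins π p ⟨(π⁻¹ (Fin.last n) : ℕ) + 1, by omega⟩ = Fin.last (n+1) :=
    Fin.ext (by simpa using hv)
  rw [← h2, Equiv.Perm.coe_inv, Equiv.symm_apply_apply]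

theorem ins_mem_Qset_iff (π : Equiv.Perm (Fin (n+1))) (p : Fin (n+2))
    (hMP : (π⁻¹ (Fin.last n) : ℕ) < (p:ℕ)) :
    ins π p ∈ Qset (n+1) ↔ π ∈ Qset n := by
  rw [mem_Qset_iff, mem_Qset_iff, ins_inv_last π p hMP]
  constructor
  · intro h i hi
    have := h i hi
    rw [vl_ins_lt π p i (by omega), vl_ins_lt π p (i+1) (by omega)] at this
    omega
  · intro h i hi
    rw [vl_ins_lt π p i (by omega), vl_ins_lt π p (i+1) (by omega)]
    have := h i hi
    omega

theorem ins_not_mem_Qset (π : Equiv.Perm (Fin (n+1))) (p : Fin (n+2))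
    (hP : 1 ≤ (p:ℕ)) (hPM : (p:ℕ) ≤ (π⁻¹ (Fin.last n) : ℕ)) :
    ins π p ∉ Qset (n+1) := by
  rw [mem_Qset_iff]
  intro h
  have := h ((p:ℕ) - 1) (by rw [ins_inv_last_of_le π p hPM]; omega)
  have he : (p:ℕ) - 1 + 1 = (p:ℕ) := by omega
  rw [he, vl_ins_self] at this
  exact Nat.not_lt_zero _ this

theorem ins_rdbar_iff (π : Equiv.Perm (Fin (n+1))) (p : Fin (n+2)) (hP : 1 ≤ (p:ℕ)) :
    rdbarCond (ins π p) ↔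
      ((p:ℕ) = n+1 ∨ ((p:ℕ) ≤ n ∧ vl π ((p:ℕ)-1) < vl π (p:ℕ))) := by
  have hpn : (p:ℕ) < n+2 := p.isLt
  rw [rdbarCond_iff, ins_inv_zero]
  constructor
  · rintro (h | ⟨j, hj2, hj1, hlt⟩)
    · left; exact h
    · right
      refine ⟨by omega, ?_⟩
      rw [vl_ins_lt π p j (by omega), vl_ins_gt π p (j+2) (by omega) (by omega)] at hlt
      have e1 : j = (p:ℕ) - 1 := by omega
      have e2 : (p:ℕ) - 1 + 2 - 1 = (p:ℕ) := by omega
      rw [e1, e2] at hlt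
      omega
  · rintro (h | ⟨hle, hlt⟩)
    · left; exact h
    · right
      refine ⟨(p:ℕ) - 1, by omega, by omega, ?_⟩
      rw [vl_ins_lt π p _ (by omega), vl_ins_gt π p _ (by omega) (by omega)]
      have e2 : (p:ℕ) - 1 + 2 - 1 = (p:ℕ) := by omega
      rw [e2]
      omega

theorem des_ins (π : Equiv.Perm (Fin (n+1))) (p : Fin (n+2)) (hP : 1 ≤ (p:ℕ))
    (hval : (p:ℕ) = n+1 ∨ ((p:ℕ) ≤ n ∧ vl π ((p:ℕ)-1) < vl π (p:ℕ))) :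
    des (ins π p) = des π + 1 := by
  have hpn : (p:ℕ) < n+2 := p.isLt
  rw [des_eq, des_eq]
  have hmem : (p:ℕ) - 1 ∈ (Finset.range (n+1)).filter
      (fun i => vl (ins π p) (i+1) < vl (ins π p) i) := by
    rw [Finset.mem_filter, Finset.mem_range]
    refine ⟨by omega, ?_⟩
    have he : (p:ℕ) - 1 + 1 = (p:ℕ) := by omega
    rw [he, vl_ins_self, vl_ins_lt π p _ (by omega)]
    omega
  rw [← Finset.card_erase_add_one hmem]
  congr 1
  apply Finset.card_nbij' (fun i => if i < (p:ℕ) then i else i - 1)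
    (fun j => if j + 1 < (p:ℕ) then j else j + 1)
  · intro i hi
    simp only [Finset.mem_coe] at hi ⊢
    rw [Finset.mem_erase, Finset.mem_filter, Finset.mem_range] at hi
    obtain ⟨hne, hir, hid⟩ := hi
    rw [Finset.mem_filter, Finset.mem_range]
    rcases lt_trichotomy (i+1) (p:ℕ) with h1 | h1 | h1
    · rw [vl_ins_lt π p _ (by omega), vl_ins_lt π p _ (by omega)] at hid
      rw [if_pos (by omega)]
      exact ⟨by omega, by omega⟩
    · exact absurd (by omega : i = (p:ℕ) - 1) hne
    · rcases eq_or_lt_of_le (show (p:ℕ) ≤ i by omega) with h2 | h2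
      · rw [← h2, vl_ins_self] at hid
        exact absurd hid (Nat.not_lt_zero _)
      · rw [vl_ins_gt π p _ (by omega) (by omega),
          vl_ins_gt π p _ (by omega) (by omega)] at hid
        rw [if_neg (by omega)]
        have e1 : i + 1 - 1 = i - 1 + 1 := by omega
        rw [e1] at hid
        exact ⟨by omega, by omega⟩
  · intro j hj
    simp only [Finset.mem_coe] at hj ⊢
    rw [Finset.mem_filter, Finset.mem_range] at hj
    obtain ⟨hjr, hjd⟩ := hj
    rw [Finset.mem_erase, Finset.mem_filter, Finset.mem_range]
    rcases lt_trichotomy (j+1) (p:ℕ) with h1 | h1 | h1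
    · rw [if_pos h1]
      refine ⟨by omega, by omega, ?_⟩
      rw [vl_ins_lt π p _ (by omega), vl_ins_lt π p _ (by omega)]
      omega
    · exfalso
      rcases hval with h | ⟨hle, hlt⟩
      · omega
      · have e1 : (p:ℕ) - 1 = j := by omega
        rw [e1] at hlt
        have e2 : (p:ℕ) = j + 1 := by omega
        rw [e2] at hlt
        omega
    · rw [if_neg (by omega)]
      refine ⟨by omega, by omega, ?_⟩
      rw [vl_ins_gt π p _ (by omega) (by omega), vl_ins_gt π p _ (by omega) (by omega)]
      have e1 : j + 1 + 1 - 1 = j + 1 := by omega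
      have e2 : j + 1 - 1 = j := by omega
      rw [e1, e2]
      omega
  · intro i hi
    simp only [Finset.mem_coe] at hi ⊢
    rw [Finset.mem_erase] at hi
    have hne := hi.1
    split_ifs <;> omega
  · intro j _
    dsimp only
    split_ifs <;> omega

theorem vl_ne (π : Equiv.Perm (Fin (n+1))) {i j : ℕ} (hi : i < n+1) (hj : j < n+1)
    (hij : i ≠ j) : vl π i ≠ vl π j := by
  rw [vl_pos π hi, vl_pos π hj]
  intro h
  have := π.injective (Fin.ext h)
  apply hij
  simpa [Fin.ext_iff] using this

theorem des_ge_M (π : Equiv.Perm (Fin (n+1))) (hQ : π ∈ Qset n) {i : ℕ}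
    (hi : i ∈ (Finset.range n).filter fun i => vl π (i+1) < vl π i) :
    (π⁻¹ (Fin.last n) : ℕ) ≤ i := by
  rw [Finset.mem_filter, Finset.mem_range] at hi
  by_contra h
  have := (mem_Qset_iff π).mp hQ i (by omega)
  omega

theorem des_le_of_Qset (π : Equiv.Perm (Fin (n+1))) (hQ : π ∈ Qset n) :
    des π ≤ n - (π⁻¹ (Fin.last n) : ℕ) := by
  rw [des_eq]
  calc ((Finset.range n).filter fun i => vl π (i+1) < vl π i).card
      ≤ (Finset.Ico (π⁻¹ (Fin.last n) : ℕ) n).card := by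
        apply Finset.card_le_card
        intro i hi
        have h1 := des_ge_M π hQ hi
        rw [Finset.mem_filter, Finset.mem_range] at hi
        rw [Finset.mem_Ico]
        omega
    _ = n - (π⁻¹ (Fin.last n) : ℕ) := by rw [Nat.card_Ico]

open scoped Classical in
theorem card_P (π : Equiv.Perm (Fin (n+1))) (hQ : π ∈ Qset n) :
    (Finset.univ.filter (fun p : Fin (n+2) => (π⁻¹ (Fin.last n) : ℕ) < (p:ℕ) ∧
      ((p:ℕ) = n+1 ∨ ((p:ℕ) ≤ n ∧ vl π ((p:ℕ)-1) < vl π (p:ℕ))))).card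
      = n + 1 - (π⁻¹ (Fin.last n) : ℕ) - des π := by
  set M := (π⁻¹ (Fin.last n) : ℕ) with hM
  have hMn : M < n + 1 := (π⁻¹ (Fin.last n)).isLt
  have step1 : (Finset.univ.filter (fun p : Fin (n+2) => M < (p:ℕ) ∧
      ((p:ℕ) = n+1 ∨ ((p:ℕ) ≤ n ∧ vl π ((p:ℕ)-1) < vl π (p:ℕ))))).card
      = ((Finset.Icc (M+1) (n+1)).filter (fun P => P = n+1 ∨
          (P ≤ n ∧ vl π (P-1) < vl π P))).card := by
    apply Finset.card_bij (fun (p : Fin (n+2)) _ => (p : ℕ))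
    · intro p hp
      rw [Finset.mem_filter] at hp ⊢
      rw [Finset.mem_Icc]
      have h0 := p.isLt
      have h1 := hp.2.1
      exact ⟨⟨by omega, by omega⟩, hp.2.2⟩
    · intro a _ b _ h; exact Fin.val_injective h
    · intro j hj
      rw [Finset.mem_filter, Finset.mem_Icc] at hj
      refine ⟨⟨j, by omega⟩, ?_, rfl⟩
      rw [Finset.mem_filter]
      refine ⟨Finset.mem_univ _, ?_⟩
      simp only [Fin.val_mk]
      exact ⟨by omega, hj.2⟩
  rw [step1]
  have hsplit := Finset.card_filter_add_card_filter_not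
    (s := Finset.Icc (M+1) (n+1))
    (p := fun P => P = n+1 ∨ (P ≤ n ∧ vl π (P-1) < vl π P))
  have hbad : (Finset.Icc (M+1) (n+1)).filter
      (fun P => ¬(P = n+1 ∨ (P ≤ n ∧ vl π (P-1) < vl π P)))
      = ((Finset.range n).filter fun i => vl π (i+1) < vl π i).image (· + 1) := by
    ext P
    rw [Finset.mem_filter, Finset.mem_Icc, Finset.mem_image]
    constructor
    · rintro ⟨⟨h1, h2⟩, h3⟩
      push_neg at h3
      obtain ⟨h4, h5⟩ := h3
      have hPn : P ≤ n := by omega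
      have hne : vl π (P-1) ≠ vl π P := vl_ne π (by omega) (by omega) (by omega)
      have hdesc : vl π P < vl π (P-1) := by
        have := h5 hPn; omega
      refine ⟨P - 1, ?_, by omega⟩
      rw [Finset.mem_filter, Finset.mem_range]
      have e : P - 1 + 1 = P := by omega
      rw [e]
      exact ⟨by omega, hdesc⟩
    · rintro ⟨j, hj, rfl⟩
      have hge := des_ge_M π hQ hj
      rw [Finset.mem_filter, Finset.mem_range] at hj
      refine ⟨⟨by omega, by omega⟩, ?_⟩
      push_neg
      refine ⟨by omega, fun _ => ?_⟩
      have e : j + 1 - 1 = j := by omega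
      rw [e]
      omega
  rw [hbad, Finset.card_image_of_injective _ (add_left_injective 1), ← des_eq] at hsplit
  rw [Nat.card_Icc] at hsplit
  have hle := des_le_of_Qset π hQ
  omega

end Aux

theorem card_RDbar_eq_card_RHD (n k : ℕ) (hk : 1 ≤ k) :
    (RDbar (n + 1) k).card = (RHD n k).card := by
  classical
  set QD : Finset (Equiv.Perm (Fin (n+1))) := (Qset n).filter (fun π => des π = k - 1) with hQD
  set S : Finset (Equiv.Perm (Fin (n+1)) × Fin (n+2)) :=
    Finset.univ.filter (fun q => q.1 ∈ Qset n ∧ des q.1 = k - 1 ∧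
      (q.1⁻¹ (Fin.last n) : ℕ) < (q.2 : ℕ) ∧
      ((q.2:ℕ) = n+1 ∨ ((q.2:ℕ) ≤ n ∧ vl q.1 ((q.2:ℕ)-1) < vl q.1 (q.2:ℕ)))) with hS
  have step1 : (RDbar (n+1) k).card = S.card := by
    apply Finset.card_nbij' (fun σ => (del σ (σ⁻¹ 0), σ⁻¹ 0)) (fun q => ins q.1 q.2)
    · intro σ hσ
      simp only [Finset.mem_coe, RDbar, Finset.mem_filter] at hσ
      obtain ⟨hσQ, hσd, hσr⟩ := hσ
      have hz : σ (σ⁻¹ 0) = 0 := Equiv.apply_symm_apply σ 0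
      have hins : ins (del σ (σ⁻¹ 0)) (σ⁻¹ 0) = σ := ins_del σ _ hz
      have hP1 : 1 ≤ ((σ⁻¹ 0 : Fin (n+2)) : ℕ) := by
        rcases (rdbarCond_iff σ).mp hσr with h | ⟨j, _, h1, _⟩ <;> omega
      set π := del σ (σ⁻¹ 0) with hπdef
      have hMP : (π⁻¹ (Fin.last n) : ℕ) < ((σ⁻¹ 0 : Fin (n+2)) : ℕ) := by
        by_contra h
        have hnot := ins_not_mem_Qset π (σ⁻¹ 0) hP1 (by omega)
        rw [hins] at hnot
        exact hnot hσQ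
      have hπQ : π ∈ Qset n := (ins_mem_Qset_iff π _ hMP).mp (by rw [hins]; exact hσQ)
      have hval := (ins_rdbar_iff π (σ⁻¹ 0) hP1).mp (by rw [hins]; exact hσr)
      have hdes : des (ins π (σ⁻¹ 0)) = des π + 1 := des_ins π _ hP1 hval
      rw [hins] at hdes
      simp only [Finset.mem_coe, hS, Finset.mem_filter]
      exact ⟨Finset.mem_univ _, hπQ, by rw [← hπdef]; omega, hMP, hval⟩
    · intro q hq
      simp only [Finset.mem_coe, hS, Finset.mem_filter] at hq
      obtain ⟨-, hQ, hd, hMP, hval⟩ := hq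
      have hP1 : 1 ≤ (q.2 : ℕ) := by omega
      simp only [Finset.mem_coe, RDbar, Finset.mem_filter]
      refine ⟨(ins_mem_Qset_iff q.1 q.2 hMP).mpr hQ, ?_,
        (ins_rdbar_iff q.1 q.2 hP1).mpr hval⟩
      rw [des_ins q.1 q.2 hP1 hval]
      omega
    · intro σ _
      show ins (del σ (σ⁻¹ 0)) (σ⁻¹ 0) = σ
      exact ins_del σ _ (Equiv.apply_symm_apply σ 0)
    · intro q _
      show (del (ins q.1 q.2) ((ins q.1 q.2)⁻¹ 0), (ins q.1 q.2)⁻¹ 0) = q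
      rw [ins_inv_zero q.1 q.2, del_ins]
  have step2 : S.card = ∑ π ∈ QD, (n + 1 - (π⁻¹ (Fin.last n) : ℕ) - (k-1)) := by
    rw [Finset.card_eq_sum_card_fiberwise (f := Prod.fst) (t := QD)
      (fun q hq => by
        simp only [Finset.mem_coe, hS, Finset.mem_filter] at hq
        simp only [Finset.mem_coe, hQD, Finset.mem_filter]
        exact ⟨hq.2.1, hq.2.2.1⟩)]
    apply Finset.sum_congr rfl
    intro π hπ
    simp only [hQD, Finset.mem_filter] at hπ
    have hc : (S.filter fun q => q.1 = π).card
        = (Finset.univ.filter (fun p : Fin (n+2) => (π⁻¹ (Fin.last n) : ℕ) < (p:ℕ) ∧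
          ((p:ℕ) = n+1 ∨ ((p:ℕ) ≤ n ∧ vl π ((p:ℕ)-1) < vl π (p:ℕ))))).card := by
      apply Finset.card_nbij' (fun q => q.2) (fun p => (π, p))
      · intro q hq
        simp only [Finset.mem_coe] at hq ⊢
        rw [Finset.mem_filter] at hq
        obtain ⟨hqS, hq1⟩ := hq
        simp only [Finset.mem_coe, hS, Finset.mem_filter] at hqS
        rw [hq1] at hqS
        rw [Finset.mem_filter]
        exact ⟨Finset.mem_univ _, hqS.2.2.2⟩
      · intro p hp
        simp only [Finset.mem_coe] at hp ⊢
        rw [Finset.mem_filter] at hp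
        rw [Finset.mem_filter]
        refine ⟨?_, rfl⟩
        simp only [Finset.mem_coe, hS, Finset.mem_filter]
        exact ⟨Finset.mem_univ _, hπ.1, hπ.2, hp.2⟩
      · intro q hq
        simp only [Finset.mem_coe] at hq ⊢
        rw [Finset.mem_filter] at hq
        exact Prod.ext hq.2.symm rfl
      · intro p _
        rfl
    rw [hc, card_P π hπ.1, hπ.2]
  have step3 : (RHD n k).card
      = ∑ π ∈ QD, (Finset.Icc ((π⁻¹ (Fin.last n) : ℕ) + 1) (n + 2 - k)).card := by
    rw [Finset.card_eq_sum_card_fiberwise (f := Prod.fst) (t := QD)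
      (fun q hq => by
        rw [Finset.mem_coe, RHD, Finset.mem_filter, Finset.mem_product] at hq
        simp only [Finset.mem_coe, hQD, Finset.mem_filter]
        exact ⟨hq.1.1, hq.2.1⟩)]
    apply Finset.sum_congr rfl
    intro π hπ
    simp only [hQD, Finset.mem_filter] at hπ
    apply Finset.card_nbij' (fun q => q.2) (fun i => (π, i))
    · intro q hq
      simp only [Finset.mem_coe] at hq ⊢
      rw [Finset.mem_filter] at hq
      obtain ⟨hqR, hq1⟩ := hq
      rw [RHD, Finset.mem_filter, Finset.mem_product, Finset.mem_Icc] at hqR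
      rw [hq1] at hqR
      rw [Finset.mem_Icc]
      omega
    · intro i hi
      simp only [Finset.mem_coe] at hi ⊢
      rw [Finset.mem_Icc] at hi
      rw [Finset.mem_filter]
      refine ⟨?_, rfl⟩
      rw [RHD, Finset.mem_filter, Finset.mem_product, Finset.mem_Icc]
      refine ⟨⟨hπ.1, by omega⟩, hπ.2, ?_⟩
      show (π⁻¹ (Fin.last n) : ℕ) < i
      omega
    · intro q hq
      simp only [Finset.mem_coe] at hq ⊢
      rw [Finset.mem_filter] at hq
      exact Prod.ext hq.2.symm rfl
    · intro i _
      rfl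
  rw [step1, step2, step3]
  apply Finset.sum_congr rfl
  intro π hπ
  simp only [hQD, Finset.mem_filter] at hπ
  have hdle := des_le_of_Qset π hπ.1
  rw [hπ.2] at hdle
  have hMn : (π⁻¹ (Fin.last n) : ℕ) < n + 1 := (π⁻¹ (Fin.last n)).isLt
  rw [Nat.card_Icc]
  omega
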